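/- There exists a constant C > 0 such that for all integers g ≥ 2 and n ≥ 0 with n² ≤ g, ∑_{j=2}^{n} (n choose j) · (j − 2)! · (2g + n − j − 2)! / (2g + n − 3)! ≤ C · n² / g. -/

import Mathlib

open Finset

private lemma natA (n j : ℕ) (h2 : 2 ≤ j) : 2 * (n.choose j * Nat.factorial (j - 2)) ≤ n ^ j := by
  obtain ⟨k, rfl⟩ := Nat.exists_eq_add_of_le h2
  have h1 : 2 * Nat.factorial k ≤ Nat.factorial (2 + k) := by
    rw [show 2 + k = k + 2 by omega]
    rw [Nat.factorial_succ, Nat.factorial_succ, ← Nat.mul_assoc]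
    exact Nat.mul_le_mul_right _ (by nlinarith)
  calc 2 * (n.choose (2 + k) * Nat.factorial (2 + k - 2))
      = n.choose (2 + k) * (2 * Nat.factorial k) := by
        simp [show 2 + k - 2 = k by omega]; ring
    _ ≤ n.choose (2 + k) * Nat.factorial (2 + k) := Nat.mul_le_mul_left _ h1
    _ = n.descFactorial (2 + k) := by
        rw [Nat.descFactorial_eq_factorial_mul_choose]; ring
    _ ≤ n ^ (2 + k) := Nat.descFactorial_le_pow _ _

private lemma natB (g n j : ℕ) (hg : 2 ≤ g) (hn : n ≤ g) (h2 : 2 ≤ j) (hjn : j ≤ n) :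
    g ^ (j - 1) * Nat.factorial (2 * g + n - j - 2) ≤ Nat.factorial (2 * g + n - 3) := by
  have key := Nat.factorial_mul_pow_le_factorial (m := 2 * g + n - j - 2) (n := j - 1)
  have h1 : g ≤ 2 * g + n - j - 2 + 1 := by omega
  have h2' : 2 * g + n - j - 2 + (j - 1) = 2 * g + n - 3 := by omega
  calc g ^ (j - 1) * Nat.factorial (2 * g + n - j - 2)
      ≤ (2 * g + n - j - 2 + 1) ^ (j - 1) * Nat.factorial (2 * g + n - j - 2) :=
        Nat.mul_le_mul_right _ (Nat.pow_le_pow_left h1 _)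
    _ = Nat.factorial (2 * g + n - j - 2) * (2 * g + n - j - 2 + 1) ^ (j - 1) := by ring
    _ ≤ Nat.factorial (2 * g + n - j - 2 + (j - 1)) := key
    _ = Nat.factorial (2 * g + n - 3) := by rw [h2']

private lemma term_bound (g n j : ℕ) (hg : 2 ≤ g) (hn : n ≤ g) (h2 : 2 ≤ j) (hjn : j ≤ n) :
    ((n.choose j : ℝ) * (Nat.factorial (j - 2) : ℝ) * (Nat.factorial (2 * g + n - j - 2) : ℝ)) /
      (Nat.factorial (2 * g + n - 3) : ℝ) ≤ (n : ℝ) ^ j / (2 * (g : ℝ) ^ (j - 1)) := by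
  have hg0 : (0 : ℝ) < g := by positivity
  have hF : (0 : ℝ) < (Nat.factorial (2 * g + n - 3) : ℝ) := by
    exact_mod_cast Nat.factorial_pos _
  have hA : (n.choose j : ℝ) * (Nat.factorial (j - 2) : ℝ) ≤ (n : ℝ) ^ j / 2 := by
    have := natA n j h2
    have h := (Nat.cast_le (α := ℝ)).mpr this
    push_cast at h
    linarith
  have hB : ((Nat.factorial (2 * g + n - j - 2) : ℝ)) / (Nat.factorial (2 * g + n - 3) : ℝ)
      ≤ 1 / (g : ℝ) ^ (j - 1) := by
    rw [div_le_div_iff₀ hF (by positivity)]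
    have := natB g n j hg hn h2 hjn
    have h := (Nat.cast_le (α := ℝ)).mpr this
    push_cast at h
    linarith
  have hAnn : (0 : ℝ) ≤ (n.choose j : ℝ) * (Nat.factorial (j - 2) : ℝ) := by positivity
  have hBnn : (0 : ℝ) ≤ ((Nat.factorial (2 * g + n - j - 2) : ℝ)) /
      (Nat.factorial (2 * g + n - 3) : ℝ) := by positivity
  calc ((n.choose j : ℝ) * (Nat.factorial (j - 2) : ℝ) * (Nat.factorial (2 * g + n - j - 2) : ℝ)) /
        (Nat.factorial (2 * g + n - 3) : ℝ)
      = ((n.choose j : ℝ) * (Nat.factorial (j - 2) : ℝ)) *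
        ((Nat.factorial (2 * g + n - j - 2) : ℝ) / (Nat.factorial (2 * g + n - 3) : ℝ)) := by ring
    _ ≤ ((n : ℝ) ^ j / 2) * (1 / (g : ℝ) ^ (j - 1)) := by
        apply mul_le_mul hA hB hBnn (by positivity)
    _ = (n : ℝ) ^ j / (2 * (g : ℝ) ^ (j - 1)) := by
        rw [div_mul_div_comm]; ring_nf

private lemma half_geom (m : ℕ) : ∑ k ∈ range m, (1 / 2 : ℝ) ^ k ≤ 2 := by
  rw [geom_sum_eq (by norm_num : (1 / 2 : ℝ) ≠ 1)]
  have : (0 : ℝ) ≤ (1 / 2 : ℝ) ^ m := by positivity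
  rw [div_le_iff_of_neg (by norm_num : (1 / 2 : ℝ) - 1 < 0)]
  linarith

/-- There is `C > 0` such that for all integers `g ≥ 2`, `n ≥ 0` with `n² ≤ g`,
`∑_{j=2}^n (n choose j) (j-2)! (2g+n-j-2)! / (2g+n-3)! ≤ C n²/g`. -/
theorem separating_sum_bound :
    ∃ C > (0 : ℝ), ∀ g n : ℕ, 2 ≤ g → n ^ 2 ≤ g →
      (∑ j ∈ Finset.Icc 2 n,
          ((n.choose j : ℝ) * (Nat.factorial (j - 2) : ℝ) *
              (Nat.factorial (2 * g + n - j - 2) : ℝ)) /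
            (Nat.factorial (2 * g + n - 3) : ℝ)) ≤
        C * (n : ℝ) ^ 2 / (g : ℝ) := by
  refine ⟨2, by norm_num, ?_⟩
  intro g n hg hn
  have hg0 : (0 : ℝ) < g := by
    have : (0 : ℕ) < g := by omega
    exact_mod_cast this
  rcases lt_or_ge n 2 with hn2 | hn2
  · rw [Finset.Icc_eq_empty (by omega), Finset.sum_empty]
    positivity
  · have hng : n ≤ g := by nlinarith
    have h2ng : 2 * n ≤ g := by nlinarith
    have hn0 : (0 : ℝ) < n := by
      have : (0 : ℕ) < n := by omega
      exact_mod_cast this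
    have hng' : (n : ℝ) / g ≤ 1 / 2 := by
      rw [div_le_div_iff₀ hg0 (by norm_num)]
      have : (2 * n : ℝ) ≤ g := by exact_mod_cast h2ng
      linarith
    calc (∑ j ∈ Finset.Icc 2 n,
          ((n.choose j : ℝ) * (Nat.factorial (j - 2) : ℝ) *
              (Nat.factorial (2 * g + n - j - 2) : ℝ)) /
            (Nat.factorial (2 * g + n - 3) : ℝ))
        ≤ ∑ j ∈ Finset.Icc 2 n, (n : ℝ) ^ j / (2 * (g : ℝ) ^ (j - 1)) := by
          apply Finset.sum_le_sum
          intro j hj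
          rw [Finset.mem_Icc] at hj
          exact term_bound g n j hg hng hj.1 hj.2
      _ = ∑ k ∈ range (n + 1 - 2), (n : ℝ) ^ (2 + k) / (2 * (g : ℝ) ^ (2 + k - 1)) := by
          rw [← Finset.Ico_add_one_right_eq_Icc, Finset.sum_Ico_eq_sum_range]
      _ ≤ ∑ k ∈ range (n + 1 - 2), (n : ℝ) ^ 2 / (2 * g) * (1 / 2) ^ k := by
          apply Finset.sum_le_sum
          intro k _
          have : (n : ℝ) ^ (2 + k) / (2 * (g : ℝ) ^ (2 + k - 1)) =
              (n : ℝ) ^ 2 / (2 * g) * ((n : ℝ) / g) ^ k := by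
            rw [show 2 + k - 1 = 1 + k by omega, pow_add, pow_add, div_pow]
            field_simp
          rw [this]
          apply mul_le_mul_of_nonneg_left _ (by positivity)
          exact pow_le_pow_left₀ (by positivity) hng' k
      _ = (n : ℝ) ^ 2 / (2 * g) * ∑ k ∈ range (n + 1 - 2), (1 / 2 : ℝ) ^ k := by
          rw [Finset.mul_sum]
      _ ≤ (n : ℝ) ^ 2 / (2 * g) * 2 := by
          apply mul_le_mul_of_nonneg_left (half_geom _) (by positivity)
      _ ≤ 2 * (n : ℝ) ^ 2 / g := by
          rw [div_mul_eq_mul_div]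
          rw [div_le_div_iff₀ (by positivity) hg0]
          nlinarith
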